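/- Excess risk bound under weighted risk control: let f : 𝒳 → {−1,1} be measurable, ε ≥ 0 and c > 0. If ∫_𝒳 ω*(x)² · 1{f(x) ≠ f*(x)} dμ(x) ≤ ε, then the excess 0-1 risk satisfies ∫_{𝒳×ℝ} (1{y ≠ f(x)} − 1{y ≠ f*(x)}) dν(x,y) ≤ c · μ{x : ω*(x) < c} + ε/c. -/

import Mathlib

open MeasureTheory

/-- Excess risk bound under weighted risk control: if the `ω*²`-weighted disagreement with the
Bayes classifier is at most `ε`, then the excess 0-1 risk is at most
`c · μ{x : ω*(x) < c} + ε/c`. -/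
theorem excess_risk_from_weighted_risk
    {𝒳 : Type*} [MeasurableSpace 𝒳]
    (μ : Measure 𝒳) [IsProbabilityMeasure μ]
    (ν : Measure (𝒳 × ℝ)) [IsProbabilityMeasure ν]
    (η : 𝒳 → ℝ) (hη : Measurable η) (hη01 : ∀ x, η x ∈ Set.Icc (0 : ℝ) 1)
    (hν : ∀ g : 𝒳 × ℝ → ℝ, Measurable g → (∃ M, ∀ p, |g p| ≤ M) →
      ∫ p, g p ∂ν = ∫ x, η x * g (x, 1) + (1 - η x) * g (x, -1) ∂μ)
    (f : 𝒳 → ℝ) (hf : Measurable f) (hfpm : ∀ x, f x = 1 ∨ f x = -1)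
    (ε c : ℝ) (hε : 0 ≤ ε) (hc : 0 < c)
    (hweighted : ∫ x, |2 * η x - 1| ^ 2 *
        (if f x ≠ (if (1/2 : ℝ) ≤ η x then (1 : ℝ) else -1) then (1 : ℝ) else 0) ∂μ ≤ ε) :
    ∫ p : 𝒳 × ℝ,
        ((if p.2 ≠ f p.1 then (1 : ℝ) else 0)
          - (if p.2 ≠ (if (1/2 : ℝ) ≤ η p.1 then (1 : ℝ) else -1) then (1 : ℝ) else 0)) ∂ν
      ≤ c * (μ {x | |2 * η x - 1| < c}).toReal + ε / c := by
  classical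
  set F : 𝒳 → ℝ := fun x => if (1/2 : ℝ) ≤ η x then (1 : ℝ) else -1 with hF
  set w : 𝒳 → ℝ := fun x => |2 * η x - 1| with hw
  set D : 𝒳 → ℝ := fun x => if f x ≠ F x then (1 : ℝ) else 0 with hD
  have hFmeas : Measurable F :=
    Measurable.ite (measurableSet_le measurable_const hη) measurable_const measurable_const
  have hwmeas : Measurable w := ((hη.const_mul 2).sub measurable_const).abs
  have hDmeas : Measurable D := by
    apply Measurable.ite _ measurable_const measurable_const
    exact (measurableSet_eq_fun hf hFmeas).compl
  -- the product-space integrand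
  set g : 𝒳 × ℝ → ℝ := fun p =>
    (if p.2 ≠ f p.1 then (1 : ℝ) else 0) - (if p.2 ≠ F p.1 then (1 : ℝ) else 0) with hg
  have hgmeas : Measurable g := by
    apply Measurable.sub
    · apply Measurable.ite _ measurable_const measurable_const
      exact (measurableSet_eq_fun measurable_snd (hf.comp measurable_fst)).compl
    · apply Measurable.ite _ measurable_const measurable_const
      exact (measurableSet_eq_fun measurable_snd (hFmeas.comp measurable_fst)).compl
  have hgbdd : ∃ M, ∀ p, |g p| ≤ M := by
    refine ⟨2, fun p => ?_⟩
    simp only [hg]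
    have h1 : |(if p.2 ≠ f p.1 then (1:ℝ) else 0)| ≤ 1 := by split <;> simp
    have h2 : |(if p.2 ≠ F p.1 then (1:ℝ) else 0)| ≤ 1 := by split <;> simp
    have h3 := abs_sub (if p.2 ≠ f p.1 then (1:ℝ) else 0) (if p.2 ≠ F p.1 then (1:ℝ) else 0)
    linarith
  have key := hν g hgmeas hgbdd
  have hpt : ∀ x, η x * g (x, 1) + (1 - η x) * g (x, -1) = w x * D x := by
    intro x
    have hne : (1 : ℝ) ≠ -1 := by norm_num
    by_cases h2 : (1/2 : ℝ) ≤ η x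
    · have habs : |2 * η x - 1| = 2 * η x - 1 := abs_of_nonneg (by linarith)
      rcases hfpm x with h1 | h1 <;>
        norm_num [hg, hD, hF, hw, h1, h2, habs] <;> ring
    · have habs : |2 * η x - 1| = -(2 * η x - 1) := abs_of_neg (by linarith)
      rcases hfpm x with h1 | h1 <;>
        norm_num [hg, hD, hF, hw, h1, h2, habs] <;> ring
  rw [key, integral_congr_ae (Filter.Eventually.of_forall hpt)]
  -- now bound ∫ w * D
  set S : Set 𝒳 := {x | w x < c} with hS
  have hSmeas : MeasurableSet S := measurableSet_lt hwmeas measurable_const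
  have hDle : ∀ x, 0 ≤ D x ∧ D x ≤ 1 := by
    intro x; constructor <;> simp only [hD] <;> split <;> norm_num
  have hwle : ∀ x, 0 ≤ w x ∧ w x ≤ 1 := by
    intro x
    have := (hη01 x).1; have := (hη01 x).2
    constructor
    · exact abs_nonneg _
    · rw [abs_le]; constructor <;> simp only [Set.mem_Icc] at * <;> nlinarith [ (hη01 x).1, (hη01 x).2]
  have hptwise : ∀ x, w x * D x ≤ S.indicator (fun _ => c) x + w x ^ 2 * D x / c := by
    intro x
    obtain ⟨hD0, hD1⟩ := hDle x
    obtain ⟨hw0, hw1⟩ := hwle x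
    by_cases hx : x ∈ S
    · rw [Set.indicator_of_mem hx]
      have : w x < c := hx
      have h2 : 0 ≤ w x ^ 2 * D x / c := by positivity
      nlinarith
    · rw [Set.indicator_of_notMem hx]
      have hxc : c ≤ w x := le_of_not_gt hx
      have hmul := mul_le_mul_of_nonneg_right hxc (mul_nonneg hw0 hD0)
      have : w x * D x ≤ w x ^ 2 * D x / c := by
        rw [le_div_iff₀ hc]
        nlinarith
      linarith
  -- integrability
  have int1 : Integrable (fun x => w x * D x) μ := by
    refine ⟨(hwmeas.mul hDmeas).aestronglyMeasurable, ?_⟩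
    apply HasFiniteIntegral.of_bounded (C := 1)
    refine Filter.Eventually.of_forall fun x => ?_
    obtain ⟨hD0, hD1⟩ := hDle x; obtain ⟨hw0, hw1⟩ := hwle x
    rw [Real.norm_eq_abs, abs_of_nonneg (by positivity)]
    nlinarith
  have int2 : Integrable (S.indicator fun _ => c) μ :=
    (integrable_const c).indicator hSmeas
  have int3 : Integrable (fun x => w x ^ 2 * D x / c) μ := by
    refine ⟨(((hwmeas.pow_const 2).mul hDmeas).div_const c).aestronglyMeasurable, ?_⟩
    apply HasFiniteIntegral.of_bounded (C := 1 / c)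
    refine Filter.Eventually.of_forall fun x => ?_
    obtain ⟨hD0, hD1⟩ := hDle x; obtain ⟨hw0, hw1⟩ := hwle x
    rw [Real.norm_eq_abs, abs_of_nonneg (by positivity)]
    have h1 : w x ^ 2 * D x ≤ 1 := by nlinarith
    gcongr
  calc ∫ x, w x * D x ∂μ
      ≤ ∫ x, (S.indicator (fun _ => c) x + w x ^ 2 * D x / c) ∂μ :=
        integral_mono int1 (int2.add int3) hptwise
    _ = (μ S).toReal * c + (∫ x, w x ^ 2 * D x ∂μ) / c := by
        rw [integral_add int2 int3, integral_indicator_const _ hSmeas, integral_div]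
        simp [measureReal_def]
    _ ≤ c * (μ {x | |2 * η x - 1| < c}).toReal + ε / c := by
        have h2 : (∫ x, w x ^ 2 * D x ∂μ) / c ≤ ε / c := by
          gcongr
        rw [mul_comm]
        exact add_le_add le_rfl h2
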